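/- arXiv:2002.11007 — 2 statements merged into one kernel-verified Lean document; each statement's English description precedes it below -/
import Mathlib

section
/- Telescoping cohomology identity: let T : X → X be a map, g : X → ℝ, π : X → X with the property that the series p(x) = ∑_{n=0}^∞ [g(Tⁿx) - g(Tⁿ(πx))] converges absolutely for every x, and suppose π∘T = π∘T∘π (π projects along 'stable' directions so that π(Tx) and T(πx) define the same further orbit sums). Define g̃(x) = g(πx) + ∑_{n=0}^∞ [g(T^{n+1}(πx)) - g(Tⁿ(π(Tx)))], assuming this series converges absolutely. Then g(x) = g̃(x) + p(x) - p(Tx) for all x. -/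
theorem telescoping_cohomology
    {X : Type*} (T pr : X → X) (g : X → ℝ)
    (hpr : pr ∘ T = pr ∘ T ∘ pr)
    (hp : ∀ x, Summable (fun n => |g (T^[n] x) - g (T^[n] (pr x))|))
    (hgt : ∀ x, Summable (fun n => |g (T^[n+1] (pr x)) - g (T^[n] (pr (T x)))|)) :
    ∀ x, g x =
      (g (pr x) + ∑' n : ℕ, (g (T^[n+1] (pr x)) - g (T^[n] (pr (T x)))))
      + (∑' n : ℕ, (g (T^[n] x) - g (T^[n] (pr x))))
      - (∑' n : ℕ, (g (T^[n] (T x)) - g (T^[n] (pr (T x))))) := by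
  intro x
  set a : ℕ → ℝ := fun n => g (T^[n] x) - g (T^[n] (pr x)) with ha
  have hsa : Summable a := (hp x).of_abs
  have hsb : Summable (fun n => g (T^[n+1] (pr x)) - g (T^[n] (pr (T x)))) :=
    (hgt x).of_abs
  have hsc : Summable (fun n => g (T^[n] (T x)) - g (T^[n] (pr (T x)))) :=
    (hp (T x)).of_abs
  have hbc : (∑' n : ℕ, (g (T^[n+1] (pr x)) - g (T^[n] (pr (T x)))))
      - (∑' n : ℕ, (g (T^[n] (T x)) - g (T^[n] (pr (T x))))) = ∑' n : ℕ, (-(a (n+1))) := by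
    rw [← Summable.tsum_sub hsb hsc]
    congr 1
    funext n
    simp only [ha, ← Function.iterate_succ_apply]
    simp only [Function.iterate_succ_apply']
    ring
  have hshift : ∑' n : ℕ, a (n+1) = (∑' n : ℕ, a n) - a 0 := by
    have := Summable.tsum_eq_zero_add hsa
    linarith
  rw [tsum_neg] at hbc
  have h0 : a 0 = g x - g (pr x) := by simp [ha]
  linarith [hbc, hshift, h0]
end

section
/- For every ε > 0 there exists λ₀ > 0 such that for all λ ≥ λ₀ and all y ≥ 1: |∫_{-∞}^{λy} (√y / √(y - w/λ)) · (sin²w / w²) dw - π| < ε. -/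
open MeasureTheory Real Filter Set
open scoped FourierTransform Topology

noncomputable section
namespace KernelPi

def S (w : ℝ) : ℝ := Real.sin w ^ 2 / w ^ 2

lemma S_nonneg (w : ℝ) : 0 ≤ S w := div_nonneg (sq_nonneg _) (sq_nonneg _)

lemma S_le_one (w : ℝ) : S w ≤ 1 := by
  rcases eq_or_ne w 0 with h | h
  · simp [S, h]
  · rw [S, div_le_one (by positivity)]
    exact Real.sin_sq_le_sq

lemma S_le_inv_sq (w : ℝ) : S w ≤ 1 / w ^ 2 := by
  rcases eq_or_ne w 0 with h | h
  · simp [S, h]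
  · apply div_le_div_of_nonneg_right (Real.sin_sq_le_one w) (by positivity)

lemma measurable_S : Measurable S := by
  unfold S; fun_prop

lemma S_le_bound (w : ℝ) : S w ≤ 2 / (1 + w ^ 2) := by
  rcases le_or_gt (w ^ 2) 1 with h | h
  · calc S w ≤ 1 := S_le_one w
      _ ≤ 2 / (1 + w ^ 2) := by
        rw [le_div_iff₀ (by positivity)]; nlinarith
  · calc S w ≤ 1 / w ^ 2 := S_le_inv_sq w
      _ ≤ 2 / (1 + w ^ 2) := by
        rw [div_le_div_iff₀ (by positivity) (by positivity)]; nlinarith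

lemma integrable_bound : Integrable (fun w : ℝ => 3 / (1 + w ^ 2)) := by
  have h := integrable_inv_one_add_sq.const_mul (3:ℝ)
  simpa [div_eq_mul_inv] using h

lemma integrable_S : Integrable S := by
  refine (integrable_bound.mono' measurable_S.aestronglyMeasurable ?_)
  filter_upwards with w
  rw [Real.norm_eq_abs, abs_of_nonneg (S_nonneg w)]
  calc S w ≤ 2 / (1 + w^2) := S_le_bound w
    _ ≤ 3 / (1 + w^2) := by gcongr; norm_num


def T (x : ℝ) : ℝ := max (1 - |x|) 0

lemma T_continuous : Continuous T :=
  (continuous_const.sub continuous_abs).max continuous_const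

lemma T_eq_zero {x : ℝ} (hx : x ∉ Icc (-1:ℝ) 1) : T x = 0 := by
  have : 1 ≤ |x| := by
    rcases not_and_or.mp hx with h | h
    · push_neg at h; rw [abs_of_neg (by linarith)]; linarith
    · push_neg at h; rw [abs_of_pos (by linarith)]; linarith
  simp [T, max_eq_right, sub_nonpos.mpr this]

lemma T_hcs : HasCompactSupport T :=
  HasCompactSupport.intro isCompact_Icc fun x hx => T_eq_zero hx

lemma T_integrable : Integrable T := T_continuous.integrable_of_hasCompactSupport T_hcs

-- antiderivative check on [0,1] piece: F x = (1-x) * sin (a*x)/a - cos (a*x)/a^2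
lemma hasDeriv_right (a : ℝ) (ha : a ≠ 0) (x : ℝ) :
    HasDerivAt (fun x => (1 - x) * Real.sin (a*x)/a - Real.cos (a*x)/a^2)
      ((1 - x) * Real.cos (a*x)) x := by
  have h1 : HasDerivAt (fun x => a * x) a x := by
    simpa using (hasDerivAt_id x).const_mul a
  have hs : HasDerivAt (fun x => Real.sin (a*x)) (Real.cos (a*x) * a) x :=
    (Real.hasDerivAt_sin (a*x)).comp x h1
  have hc : HasDerivAt (fun x => Real.cos (a*x)) (-Real.sin (a*x) * a) x :=
    (Real.hasDerivAt_cos (a*x)).comp x h1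
  have h2 : HasDerivAt (fun x => (1 - x) * Real.sin (a*x)/a - Real.cos (a*x)/a^2)
      (((-1) * Real.sin (a*x) + (1-x) * (Real.cos (a*x) * a))/a - (-Real.sin (a*x) * a)/a^2) x := by
    have := ((((hasDerivAt_const x (1:ℝ)).sub (hasDerivAt_id x)).mul hs).div_const a).sub
      (hc.div_const (a^2))
    exact this.congr_deriv (by simp <;> ring)
  convert h2 using 1
  field_simp
  ring

lemma hasDeriv_left (a : ℝ) (ha : a ≠ 0) (x : ℝ) :
    HasDerivAt (fun x => (1 + x) * Real.sin (a*x)/a + Real.cos (a*x)/a^2)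
      ((1 + x) * Real.cos (a*x)) x := by
  have h1 : HasDerivAt (fun x => a * x) a x := by
    simpa using (hasDerivAt_id x).const_mul a
  have hs : HasDerivAt (fun x => Real.sin (a*x)) (Real.cos (a*x) * a) x :=
    (Real.hasDerivAt_sin (a*x)).comp x h1
  have hc : HasDerivAt (fun x => Real.cos (a*x)) (-Real.sin (a*x) * a) x :=
    (Real.hasDerivAt_cos (a*x)).comp x h1
  have h2 : HasDerivAt (fun x => (1 + x) * Real.sin (a*x)/a + Real.cos (a*x)/a^2)
      ((1 * Real.sin (a*x) + (1+x) * (Real.cos (a*x) * a))/a + (-Real.sin (a*x) * a)/a^2) x := by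
    have := ((((hasDerivAt_const x (1:ℝ)).add (hasDerivAt_id x)).mul hs).div_const a).add
      (hc.div_const (a^2))
    exact this.congr_deriv (by simp <;> ring)
  convert h2 using 1
  field_simp
  ring

lemma J_eq (a : ℝ) (ha : a ≠ 0) :
    ∫ x : ℝ, Real.cos (a * x) * T x = 2 * (1 - Real.cos a) / a ^ 2 := by
  have hsupp : ∀ x, x ∉ Icc (-1:ℝ) 1 → Real.cos (a*x) * T x = 0 := fun x hx => by
    rw [T_eq_zero hx, mul_zero]
  rw [← setIntegral_eq_integral_of_forall_compl_eq_zero hsupp]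
  rw [integral_Icc_eq_integral_Ioc, ← intervalIntegral.integral_of_le (by norm_num : (-1:ℝ) ≤ 1)]
  have hcont : Continuous (fun x => Real.cos (a*x) * T x) :=
    (Real.continuous_cos.comp (continuous_const.mul continuous_id)).mul T_continuous
  have hsplit := intervalIntegral.integral_add_adjacent_intervals
    (a := (-1:ℝ)) (b := 0) (c := 1) (f := fun x => Real.cos (a*x) * T x) (μ := volume)
    (hcont.intervalIntegrable _ _) (hcont.intervalIntegrable _ _)
  · rw [← hsplit]
    have hL : (∫ x in (-1:ℝ)..0, Real.cos (a*x) * T x)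
        = ∫ x in (-1:ℝ)..0, (1 + x) * Real.cos (a*x) := by
      apply intervalIntegral.integral_congr
      intro x hx
      rw [uIcc_of_le (by norm_num : (-1:ℝ) ≤ 0)] at hx
      have h1 : |x| = -x := abs_of_nonpos hx.2
      have hT : T x = 1 + x := by
        rw [T, h1, max_eq_left (by linarith [hx.1])]; ring
      simp only [hT]; ring
    have hR : (∫ x in (0:ℝ)..1, Real.cos (a*x) * T x)
        = ∫ x in (0:ℝ)..1, (1 - x) * Real.cos (a*x) := by
      apply intervalIntegral.integral_congr
      intro x hx
      rw [uIcc_of_le (by norm_num : (0:ℝ) ≤ 1)] at hx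
      have h1 : |x| = x := abs_of_nonneg hx.1
      have hT : T x = 1 - x := by
        rw [T, h1, max_eq_left (by linarith [hx.2])]
      simp only [hT]; ring
    have contL : Continuous fun x => (1 + x) * Real.cos (a*x) :=
      (continuous_const.add continuous_id).mul
        (Real.continuous_cos.comp (continuous_const.mul continuous_id))
    have contR : Continuous fun x => (1 - x) * Real.cos (a*x) :=
      (continuous_const.sub continuous_id).mul
        (Real.continuous_cos.comp (continuous_const.mul continuous_id))
    have eqL : (∫ x in (-1:ℝ)..0, (1 + x) * Real.cos (a*x))
        = (1 - Real.cos a) / a ^ 2 := by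
      rw [intervalIntegral.integral_eq_sub_of_hasDerivAt
        (fun x _ => hasDeriv_left a ha x) (contL.intervalIntegrable _ _)]
      simp [Real.cos_neg, Real.sin_neg]
      all_goals field_simp
      all_goals ring
    have eqR : (∫ x in (0:ℝ)..1, (1 - x) * Real.cos (a*x))
        = (1 - Real.cos a) / a ^ 2 := by
      rw [intervalIntegral.integral_eq_sub_of_hasDerivAt
        (fun x _ => hasDeriv_right a ha x) (contR.intervalIntegrable _ _)]
      simp
      all_goals field_simp
      all_goals ring
    rw [hL, hR, eqL, eqR]
    ring


def fC (x : ℝ) : ℂ := (T x : ℂ)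

lemma fC_continuous : Continuous fC := Complex.continuous_ofReal.comp T_continuous

lemma fC_integrable : Integrable fC :=
  fC_continuous.integrable_of_hasCompactSupport
    (T_hcs.comp_left (g := (Complex.ofReal)) rfl)

lemma T_even (x : ℝ) : T (-x) = T x := by simp [T]

lemma odd_int_zero (a : ℝ) : (∫ x : ℝ, Real.sin (a * x) * T x) = 0 := by
  have h : (∫ x : ℝ, Real.sin (a * x) * T x)
      = ∫ x : ℝ, Real.sin (a * (-x)) * T (-x) := (integral_neg_eq_self _ _).symm
  have h2 : ∀ x : ℝ, Real.sin (a * (-x)) * T (-x) = -(Real.sin (a * x) * T x) := by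
    intro x; rw [mul_neg, Real.sin_neg, T_even]; ring
  simp_rw [h2, integral_neg] at h
  linarith

lemma fourier_fC (w : ℝ) (hw : w ≠ 0) :
    𝓕 fC w = ((S (Real.pi * w) : ℝ) : ℂ) := by
  rw [Real.fourier_real_eq_integral_exp_smul]
  have key : ∀ v : ℝ, Complex.exp (↑(-2 * Real.pi * v * w) * Complex.I) • fC v
      = ((Real.cos (2 * Real.pi * w * v) * T v : ℝ) : ℂ)
        + ((Real.sin (2 * Real.pi * w * v) * T v : ℝ) : ℂ) * Complex.I * (-1) := by
    intro v
    rw [Complex.exp_mul_I, fC]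
    rw [← Complex.ofReal_cos, ← Complex.ofReal_sin]
    have h1 : Real.cos (-2 * Real.pi * v * w) = Real.cos (2 * Real.pi * w * v) := by
      rw [show (-2 * Real.pi * v * w) = -(2 * Real.pi * w * v) by ring, Real.cos_neg]
    have h2 : Real.sin (-2 * Real.pi * v * w) = -Real.sin (2 * Real.pi * w * v) := by
      rw [show (-2 * Real.pi * v * w) = -(2 * Real.pi * w * v) by ring, Real.sin_neg]
    rw [h1, h2, smul_eq_mul]
    push_cast
    ring
  simp_rw [key]
  rw [integral_add, integral_mul_const, integral_mul_const]
  · have e1 : (∫ a : ℝ, ((Real.cos (2 * Real.pi * w * a) * T a : ℝ) : ℂ))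
        = (((∫ a : ℝ, Real.cos (2 * Real.pi * w * a) * T a) : ℝ) : ℂ) := integral_ofReal
    have e2 : (∫ a : ℝ, ((Real.sin (2 * Real.pi * w * a) * T a : ℝ) : ℂ))
        = (((∫ a : ℝ, Real.sin (2 * Real.pi * w * a) * T a) : ℝ) : ℂ) := integral_ofReal
    rw [e1, e2, odd_int_zero]
    have ha : (2 * Real.pi * w) ≠ 0 := by
      have := Real.pi_pos; positivity
    rw [J_eq _ ha]
    have trig : 2 * (1 - Real.cos (2 * Real.pi * w)) / (2 * Real.pi * w) ^ 2
        = S (Real.pi * w) := by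
      have hc : Real.cos (2 * Real.pi * w) = 1 - 2 * Real.sin (Real.pi * w) ^ 2 := by
        rw [show 2 * Real.pi * w = 2 * (Real.pi * w) by ring, Real.cos_two_mul']
        have := Real.sin_sq_add_cos_sq (Real.pi * w)
        ring_nf
        nlinarith [Real.sin_sq_add_cos_sq (Real.pi * w)]
      rw [hc, S]
      have hpw : (Real.pi * w) ≠ 0 := by
        have := Real.pi_ne_zero; exact mul_ne_zero this hw
      field_simp
      ring
    rw [trig]
    simp
  · exact ((Real.continuous_cos.comp (continuous_const.mul continuous_id)).mul T_continuous
      |>.integrable_of_hasCompactSupport (T_hcs.mul_left)).ofReal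
  · apply Integrable.mul_const
    exact (((Real.continuous_sin.comp (continuous_const.mul continuous_id)).mul T_continuous
      |>.integrable_of_hasCompactSupport (T_hcs.mul_left)).ofReal.mul_const Complex.I)

lemma integrable_S_pi : Integrable (fun w : ℝ => S (Real.pi * w)) :=
  integrable_S.comp_mul_left' Real.pi_ne_zero

lemma fourier_fC_ae : 𝓕 fC =ᵐ[volume] fun w => ((S (Real.pi * w) : ℝ) : ℂ) := by
  have h0 : ({0}ᶜ : Set ℝ) ∈ ae (volume : Measure ℝ) :=
    compl_mem_ae_iff.mpr (measure_singleton 0)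
  filter_upwards [h0] with w hw
  exact fourier_fC w hw

lemma fourier_fC_integrable : Integrable (𝓕 fC) := by
  refine (Integrable.congr ?_ fourier_fC_ae.symm)
  exact integrable_S_pi.ofReal

lemma integral_S_pi_eq_one : (∫ w : ℝ, S (Real.pi * w)) = 1 := by
  have hinv := fC_integrable.fourierInv_fourier_eq fourier_fC_integrable
    (v := 0) fC_continuous.continuousAt
  have h0 : fC 0 = 1 := by simp [fC, T]
  have hL : 𝓕⁻ (𝓕 fC) 0 = ∫ w : ℝ, 𝓕 fC w := by
    rw [Real.fourierInv_eq']
    simp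
  rw [hL, h0] at hinv
  have : (∫ w : ℝ, 𝓕 fC w) = ((∫ w : ℝ, S (Real.pi * w) : ℝ) : ℂ) := by
    rw [integral_congr_ae fourier_fC_ae]; exact integral_ofReal
  rw [this] at hinv
  exact_mod_cast hinv

theorem integral_S : (∫ w : ℝ, S w) = Real.pi := by
  have h := integral_S_pi_eq_one
  rw [MeasureTheory.Measure.integral_comp_mul_left S Real.pi] at h
  rw [abs_of_pos (by positivity : (0:ℝ) < Real.pi⁻¹), smul_eq_mul] at h
  have hπ := Real.pi_ne_zero
  field_simp at h
  linarith [h]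


/-- The one-parameter integrand. -/
def G (μ w : ℝ) : ℝ := (1 / Real.sqrt (1 - w / μ)) * S w

lemma measurable_G (μ : ℝ) : Measurable (G μ) :=
  (measurable_const.div ((Real.continuous_sqrt.measurable).comp
    (measurable_const.sub (measurable_id.div_const μ)))).mul measurable_S

lemma G_nonneg (μ w : ℝ) : 0 ≤ G μ w :=
  mul_nonneg (by positivity) (S_nonneg w)

lemma sqrt_factor_le {μ w : ℝ} (hμ : 0 < μ) (hw : w < μ / 2) :
    1 / Real.sqrt (1 - w / μ) ≤ Real.sqrt 2 := by
  have h1 : (1:ℝ)/2 ≤ 1 - w / μ := by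
    rw [le_sub_iff_add_le, ← le_sub_iff_add_le']
    rw [div_le_iff₀ hμ] at *
    nlinarith
  have h2 : Real.sqrt (1/2) ≤ Real.sqrt (1 - w/μ) := Real.sqrt_le_sqrt h1
  have h3 : (0:ℝ) < Real.sqrt (1/2) := Real.sqrt_pos.mpr (by norm_num)
  rw [div_le_iff₀ (lt_of_lt_of_le h3 h2)]
  calc (1:ℝ) = Real.sqrt 2 * Real.sqrt (1/2) := by
        rw [← Real.sqrt_mul (by norm_num)]; norm_num
    _ ≤ Real.sqrt 2 * Real.sqrt (1 - w/μ) := by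
        gcongr
  
lemma G_le_on_A {μ w : ℝ} (hμ : 0 < μ) (hw : w < μ / 2) :
    G μ w ≤ 3 / (1 + w ^ 2) := by
  have h := sqrt_factor_le hμ hw
  calc G μ w ≤ Real.sqrt 2 * S w :=
        mul_le_mul_of_nonneg_right h (S_nonneg w)
    _ ≤ Real.sqrt 2 * (2 / (1 + w^2)) :=
        mul_le_mul_of_nonneg_left (S_le_bound w) (Real.sqrt_nonneg 2)
    _ ≤ 3 / (1 + w^2) := by
        rw [div_eq_mul_inv, div_eq_mul_inv (3:ℝ), ← mul_assoc]
        apply mul_le_mul_of_nonneg_right _ (by positivity)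
        nlinarith [Real.sq_sqrt (by norm_num : (0:ℝ) ≤ 2), Real.sqrt_nonneg 2]

lemma integrableOn_A (μ : ℝ) (hμ : 0 < μ) : IntegrableOn (G μ) (Iio (μ/2)) := by
  apply Integrable.mono' (integrable_bound.integrableOn)
    ((measurable_G μ).aestronglyMeasurable.restrict)
  refine ae_restrict_of_forall_mem measurableSet_Iio fun w hw => ?_
  rw [Real.norm_eq_abs, abs_of_nonneg (G_nonneg μ w)]
  exact G_le_on_A hμ hw

/-- bound on the near-singularity piece -/
def B (μ w : ℝ) : ℝ := (4 / μ^2) * Real.sqrt μ * (μ - w) ^ (-(1/2) : ℝ)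

lemma G_le_B {μ w : ℝ} (hμ : 0 < μ) (hw : w ∈ Ico (μ/2) μ) : G μ w ≤ B μ w := by
  obtain ⟨hw1, hw2⟩ := hw
  have hpos : 0 < μ - w := by linarith
  have hwpos : 0 < w := by linarith
  have hfac : 1 / Real.sqrt (1 - w/μ) = Real.sqrt μ * (μ - w) ^ (-(1/2) : ℝ) := by
    have h : 1 - w/μ = (μ - w)/μ := by field_simp
    rw [h, Real.sqrt_div hpos.le, one_div_div, Real.rpow_neg hpos.le, ← Real.sqrt_eq_rpow,
      div_eq_mul_inv]
  have hSw : S w ≤ 4 / μ^2 := by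
    refine le_trans (S_le_inv_sq w) ?_
    rw [div_le_div_iff₀ (by positivity) (by positivity)]
    nlinarith
  calc G μ w = (Real.sqrt μ * (μ - w) ^ (-(1/2) : ℝ)) * S w := by rw [G, hfac]
    _ ≤ (Real.sqrt μ * (μ - w) ^ (-(1/2) : ℝ)) * (4/μ^2) := by
        apply mul_le_mul_of_nonneg_left hSw
        positivity
    _ = B μ w := by rw [B]; ring

lemma intervalIntegrable_B (μ : ℝ) : IntervalIntegrable (B μ) volume (μ/2) μ := by
  apply IntervalIntegrable.const_mul
  have h := (intervalIntegral.intervalIntegrable_rpow'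
      (a := 0) (b := μ/2) (r := (-(1/2) : ℝ)) (by norm_num)).comp_sub_left μ
  simpa [show μ - μ/2 = μ/2 by ring] using h.symm

lemma integrableOn_B_Ico (μ : ℝ) (hμ : 0 < μ) : IntegrableOn (B μ) (Ico (μ/2) μ) := by
  have h := (intervalIntegrable_iff_integrableOn_Ioc_of_le (by linarith)).mp
    (intervalIntegrable_B μ)
  have h2 : IntegrableOn (B μ) (Icc (μ/2) μ) :=
    (integrableOn_Icc_iff_integrableOn_Ioc).mpr h
  exact h2.mono_set Ico_subset_Icc_self

lemma integrableOn_G_Ico (μ : ℝ) (hμ : 0 < μ) : IntegrableOn (G μ) (Ico (μ/2) μ) := by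
  apply Integrable.mono' (integrableOn_B_Ico μ hμ)
    ((measurable_G μ).aestronglyMeasurable.restrict)
  refine ae_restrict_of_forall_mem measurableSet_Ico fun w hw => ?_
  rw [Real.norm_eq_abs, abs_of_nonneg (G_nonneg μ w)]
  exact G_le_B hμ hw

lemma integral_B_le (μ : ℝ) (hμ : 0 < μ) : (∫ w in Ico (μ/2) μ, B μ w) ≤ 8 / μ := by
  have hle : μ/2 ≤ μ := by linarith
  have h1 : (∫ w in Ico (μ/2) μ, B μ w) = ∫ w in (μ/2)..μ, B μ w := by
    rw [intervalIntegral.integral_of_le hle, integral_Ico_eq_integral_Ioo,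
      integral_Ioc_eq_integral_Ioo]
  rw [h1]
  simp only [B]
  -- B μ w = c * (μ - w)^(-1/2)
  rw [intervalIntegral.integral_const_mul]
  have h2 : (∫ w in (μ/2)..μ, (μ - w) ^ (-(1/2) : ℝ))
      = ∫ x in (μ - μ)..(μ - μ/2), x ^ (-(1/2) : ℝ) := by
    rw [← intervalIntegral.integral_comp_sub_left (fun x => x ^ (-(1/2):ℝ)) μ]
  rw [h2]
  have h3 : (∫ x in (μ - μ)..(μ - μ/2), x ^ (-(1/2) : ℝ))
      = ((μ/2) ^ ((1:ℝ)/2)) / (1/2) := by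
    rw [show μ - μ = (0:ℝ) by ring, show μ - μ/2 = μ/2 by ring]
    rw [integral_rpow (Or.inl (by norm_num))]
    norm_num
  rw [h3]
  have h4 : ((μ/2) ^ ((1:ℝ)/2)) ≤ Real.sqrt μ := by
    rw [← Real.sqrt_eq_rpow]
    exact Real.sqrt_le_sqrt (by linarith)
  have h5 : 4 / μ^2 * Real.sqrt μ * (((μ/2) ^ ((1:ℝ)/2)) / (1/2))
      ≤ 4 / μ^2 * Real.sqrt μ * (Real.sqrt μ / (1/2)) := by
    gcongr
  refine le_trans h5 ?_
  have h6 : Real.sqrt μ * Real.sqrt μ = μ := Real.mul_self_sqrt hμ.le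
  have : 4 / μ^2 * Real.sqrt μ * (Real.sqrt μ / (1/2)) = 8 * (Real.sqrt μ * Real.sqrt μ) / μ^2 := by
    ring
  rw [this, h6]
  rw [div_le_div_iff₀ (by positivity) hμ]
  nlinarith

lemma I2_le (μ : ℝ) (hμ : 0 < μ) : |∫ w in Ico (μ/2) μ, G μ w| ≤ 8 / μ := by
  have h : ‖∫ w in Ico (μ/2) μ, G μ w‖ ≤ ∫ w in Ico (μ/2) μ, B μ w := by
    apply norm_integral_le_of_norm_le (integrableOn_B_Ico μ hμ)
    refine ae_restrict_of_forall_mem measurableSet_Ico fun w hw => ?_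
    rw [Real.norm_eq_abs, abs_of_nonneg (G_nonneg μ w)]
    exact G_le_B hμ hw
  rw [Real.norm_eq_abs] at h
  exact le_trans h (integral_B_le μ hμ)

lemma tendsto_I2 : Filter.Tendsto (fun μ => ∫ w in Ico (μ/2) μ, G μ w)
    Filter.atTop (𝓝 0) := by
  apply squeeze_zero_norm' (a := fun μ => 8 / μ)
  · filter_upwards [Filter.eventually_gt_atTop (0:ℝ)] with μ hμ
    rw [Real.norm_eq_abs]
    exact I2_le μ hμ
  · apply Filter.Tendsto.div_atTop tendsto_const_nhds Filter.tendsto_id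

lemma tendsto_I1 : Filter.Tendsto (fun μ => ∫ w in Iio (μ/2), G μ w)
    Filter.atTop (𝓝 Real.pi) := by
  rw [← integral_S]
  have key : ∀ μ : ℝ, (∫ w in Iio (μ/2), G μ w)
      = ∫ w, (Iio (μ/2)).indicator (G μ) w := by
    intro μ; rw [integral_indicator measurableSet_Iio]
  simp_rw [key]
  apply MeasureTheory.tendsto_integral_filter_of_dominated_convergence
    (bound := fun w => 3 / (1 + w^2))
  · filter_upwards with μ
    exact ((measurable_G μ).indicator measurableSet_Iio).aestronglyMeasurable
  · filter_upwards [Filter.eventually_gt_atTop (0:ℝ)] with μ hμ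
    filter_upwards with w
    rw [Real.norm_eq_abs]
    by_cases hw : w ∈ Iio (μ/2)
    · rw [Set.indicator_of_mem hw, abs_of_nonneg (G_nonneg μ w)]
      exact G_le_on_A hμ hw
    · rw [Set.indicator_of_notMem hw, abs_zero]
      positivity
  · exact integrable_bound
  · filter_upwards with w
    have h1 : Filter.Tendsto (fun μ : ℝ => 1 - w / μ) Filter.atTop (𝓝 1) := by
      have : Filter.Tendsto (fun μ : ℝ => w / μ) Filter.atTop (𝓝 0) :=
        Filter.Tendsto.div_atTop tendsto_const_nhds Filter.tendsto_id
      simpa using tendsto_const_nhds.sub this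
    have h2 : Filter.Tendsto (fun μ : ℝ => 1 / Real.sqrt (1 - w / μ) * S w)
        Filter.atTop (𝓝 (S w)) := by
      have hs : Filter.Tendsto (fun μ : ℝ => Real.sqrt (1 - w / μ))
          Filter.atTop (𝓝 1) := by
        have := (Real.continuous_sqrt.tendsto 1).comp h1
        simpa [Function.comp_def] using this
      have hd := hs.inv₀ one_ne_zero
      rw [inv_one] at hd
      simpa [one_div] using hd.mul_const (S w)
    apply Filter.Tendsto.congr' ?_ h2
    filter_upwards [Filter.eventually_gt_atTop (2*w)] with μ hμ
    have hmem : w ∈ Iio (μ/2) := mem_Iio.mpr (by linarith)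
    exact (Set.indicator_of_mem hmem (G μ)).symm

lemma integral_G_split (μ : ℝ) (hμ : 0 < μ) :
    (∫ w in Iio μ, G μ w)
      = (∫ w in Iio (μ/2), G μ w) + ∫ w in Ico (μ/2) μ, G μ w := by
  have hdisj : Disjoint (Iio (μ/2)) (Ico (μ/2) μ) :=
    ((Set.Iio_disjoint_Ici le_rfl).mono_right Ico_subset_Ici_self)
  rw [← setIntegral_union hdisj measurableSet_Ico
    (integrableOn_A μ hμ) (integrableOn_G_Ico μ hμ),
    Iio_union_Ico_eq_Iio (by linarith)]

theorem tendsto_I : Filter.Tendsto (fun μ => ∫ w in Iio μ, G μ w)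
    Filter.atTop (𝓝 Real.pi) := by
  have h := tendsto_I1.add tendsto_I2
  rw [add_zero] at h
  apply Filter.Tendsto.congr' ?_ h
  filter_upwards [Filter.eventually_gt_atTop (0:ℝ)] with μ hμ
  exact (integral_G_split μ hμ).symm


lemma integral_eq (lam y : ℝ) (hlam : 0 < lam) (hy : 1 ≤ y) :
    (∫ w in Set.Iio (lam * y),
        (Real.sqrt y / Real.sqrt (y - w / lam)) * (Real.sin w ^ 2 / w ^ 2))
      = ∫ w in Iio (lam * y), G (lam * y) w := by
  apply setIntegral_congr_fun measurableSet_Iio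
  intro w hw
  have hy0 : (0:ℝ) < y := by linarith
  have hμ : 0 < lam * y := by positivity
  have hfrac : 0 < 1 - w / (lam * y) := by
    rw [sub_pos, div_lt_one hμ]
    exact hw
  have h1 : y - w / lam = y * (1 - w / (lam * y)) := by
    field_simp
  have ht : Real.sqrt (1 - w / (lam * y)) ≠ 0 :=
    (Real.sqrt_pos.mpr hfrac).ne'
  have hsy : Real.sqrt y ≠ 0 := (Real.sqrt_pos.mpr hy0).ne'
  show Real.sqrt y / Real.sqrt (y - w / lam) * (Real.sin w ^ 2 / w ^ 2) = _
  rw [G, S, h1, Real.sqrt_mul hy0.le]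
  rw [div_mul_eq_div_div, div_self hsy]

end KernelPi

theorem kernel_integral_tends_to_pi :
    ∀ ε > 0, ∃ Λ > (0:ℝ), ∀ lam ≥ Λ, ∀ y ≥ (1:ℝ),
      |(∫ w in Set.Iio (lam * y),
          (Real.sqrt y / Real.sqrt (y - w / lam)) *
            (Real.sin w ^ 2 / w ^ 2)) - Real.pi| < ε := by
  intro ε hε
  obtain ⟨N, hN⟩ := (Metric.tendsto_atTop.mp KernelPi.tendsto_I) ε hε
  refine ⟨max N 1, lt_of_lt_of_le one_pos (le_max_right N 1), fun lam hlam y hy => ?_⟩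
  have hlam1 : (1:ℝ) ≤ lam := le_trans (le_max_right N 1) hlam
  have hlam0 : (0:ℝ) < lam := by linarith
  have hμN : N ≤ lam * y := by nlinarith [le_trans (le_max_left N 1) hlam]
  rw [KernelPi.integral_eq lam y hlam0 hy]
  have := hN (lam * y) hμN
  rwa [Real.dist_eq] at this
end
end
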